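/- Let A and ΔA be real m×n matrices with rank(A) = n and ‖ΔA‖₂‖A†‖₂ ≤ 1/2, and set ε⊥ = ‖(I − AA†)ΔA‖₂/‖A‖₂ and κ = κ₂(A). Then for each j with ℓ_j > 0, |ℓ̃_j − ℓ_j|/ℓ_j ≤ 4(√((1−ℓ_j)/ℓ_j) + κ ε⊥/ℓ_j) κ ε⊥. -/

import Mathlib

open Matrix

/-- Spectral (two-)norm of a real rectangular matrix. -/
noncomputable def spec {m n : ℕ} (A : Matrix (Fin m) (Fin n) ℝ) : ℝ :=
  ‖LinearMap.toContinuousLinearMap (Matrix.toEuclideanLin A)‖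

/-- Frobenius norm. -/
noncomputable def frob {m n : ℕ} (A : Matrix (Fin m) (Fin n) ℝ) : ℝ :=
  Real.sqrt (∑ i, ∑ j, (A i j) ^ 2)

/-- Leverage score: squared Euclidean norm of the j-th row. -/
noncomputable def lev {m n : ℕ} (Q : Matrix (Fin m) (Fin n) ℝ) (j : Fin m) : ℝ :=
  ∑ k, (Q j k) ^ 2

/-- Euclidean norm of the j-th row. -/
noncomputable def rnorm {m n : ℕ} (A : Matrix (Fin m) (Fin n) ℝ) (j : Fin m) : ℝ :=
  Real.sqrt (∑ k, (A j k) ^ 2)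

/-- Moore–Penrose inverse of a full column rank matrix. -/
noncomputable def pinv {m n : ℕ} (A : Matrix (Fin m) (Fin n) ℝ) : Matrix (Fin n) (Fin m) ℝ :=
  (Aᵀ * A)⁻¹ * Aᵀ

open RealInnerProductSpace

namespace StAux

noncomputable def mapE {m n : ℕ} (M : Matrix (Fin m) (Fin n) ℝ) :
    EuclideanSpace ℝ (Fin n) →L[ℝ] EuclideanSpace ℝ (Fin m) :=
  LinearMap.toContinuousLinearMap (Matrix.toEuclideanLin M)

lemma spec_eq {m n : ℕ} (M : Matrix (Fin m) (Fin n) ℝ) : spec M = ‖mapE M‖ := rfl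

lemma spec_nonneg {m n : ℕ} (M : Matrix (Fin m) (Fin n) ℝ) : 0 ≤ spec M :=
  norm_nonneg _

lemma mapE_le {m n : ℕ} (M : Matrix (Fin m) (Fin n) ℝ) (x : EuclideanSpace ℝ (Fin n)) :
    ‖mapE M x‖ ≤ spec M * ‖x‖ := (mapE M).le_opNorm x

lemma mapE_mul {m k n : ℕ} (M : Matrix (Fin m) (Fin k) ℝ) (N : Matrix (Fin k) (Fin n) ℝ)
    (x : EuclideanSpace ℝ (Fin n)) : mapE (M * N) x = mapE M (mapE N x) := by
  simp [mapE, Matrix.toEuclideanLin_apply, Matrix.mulVec_mulVec]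

lemma mapE_add {m n : ℕ} (M N : Matrix (Fin m) (Fin n) ℝ) (x : EuclideanSpace ℝ (Fin n)) :
    mapE (M + N) x = mapE M x + mapE N x := by
  simp [mapE]

lemma mapE_sub {m n : ℕ} (M N : Matrix (Fin m) (Fin n) ℝ) (x : EuclideanSpace ℝ (Fin n)) :
    mapE (M - N) x = mapE M x - mapE N x := by
  simp [mapE]

lemma mapE_one {n : ℕ} (x : EuclideanSpace ℝ (Fin n)) :
    mapE (1 : Matrix (Fin n) (Fin n) ℝ) x = x := by
  simp [mapE, Matrix.toEuclideanLin_apply]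

lemma mapE_neg {m n : ℕ} (M : Matrix (Fin m) (Fin n) ℝ) (x : EuclideanSpace ℝ (Fin n)) :
    mapE (-M) x = -(mapE M x) := by
  simp [mapE]

lemma spec_mul_le {m k n : ℕ} (M : Matrix (Fin m) (Fin k) ℝ) (N : Matrix (Fin k) (Fin n) ℝ) :
    spec (M * N) ≤ spec M * spec N := by
  have h : mapE (M * N) = (mapE M).comp (mapE N) :=
    ContinuousLinearMap.ext fun x => mapE_mul M N x
  rw [spec_eq, spec_eq, spec_eq, h]
  exact ContinuousLinearMap.opNorm_comp_le _ _

lemma spec_add_le {m n : ℕ} (M N : Matrix (Fin m) (Fin n) ℝ) :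
    spec (M + N) ≤ spec M + spec N := by
  have h : mapE (M + N) = mapE M + mapE N :=
    ContinuousLinearMap.ext fun x => by rw [mapE_add]; rfl
  rw [spec_eq, spec_eq, spec_eq, h]
  exact norm_add_le _ _

lemma spec_neg {m n : ℕ} (M : Matrix (Fin m) (Fin n) ℝ) : spec (-M) = spec M := by
  have h : mapE (-M) = -(mapE M) := ContinuousLinearMap.ext fun x => mapE_neg M x
  rw [spec_eq, spec_eq, h, norm_neg]

lemma eq_zero_of_spec_eq_zero {m n : ℕ} {M : Matrix (Fin m) (Fin n) ℝ}
    (h : spec M = 0) : M = 0 := by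
  rw [spec_eq, norm_eq_zero] at h
  have h2 : Matrix.toEuclideanLin M = 0 := by
    apply LinearMap.ext
    intro x
    have := congrFun (congrArg DFunLike.coe h) x
    simpa [mapE] using this
  exact (LinearEquiv.map_eq_zero_iff _).mp h2

lemma mapE_inner {m n : ℕ} (M : Matrix (Fin m) (Fin n) ℝ) (x : EuclideanSpace ℝ (Fin n))
    (y : EuclideanSpace ℝ (Fin m)) : ⟪mapE M x, y⟫ = ⟪x, mapE Mᵀ y⟫ := by
  have hct : Mᴴ = Mᵀ := rfl
  have h := Matrix.toEuclideanLin_conjTranspose_eq_adjoint (𝕜 := ℝ) M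
  rw [hct] at h
  show ⟪Matrix.toEuclideanLin M x, y⟫ = ⟪x, Matrix.toEuclideanLin Mᵀ y⟫
  rw [h, LinearMap.adjoint_inner_right]

/-- contraction property of symmetric idempotents -/
lemma contraction {k : ℕ} {P : Matrix (Fin k) (Fin k) ℝ} (hsym : Pᵀ = P) (hidem : P * P = P)
    (x : EuclideanSpace ℝ (Fin k)) : ‖mapE P x‖ ≤ ‖x‖ := by
  have h1 : ⟪mapE P x, mapE P x⟫ = ⟪x, mapE P x⟫ := by
    rw [mapE_inner, hsym, ← mapE_mul, hidem]
  have h2 : ‖mapE P x‖ ^ 2 = ⟪x, mapE P x⟫ := by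
    rw [← h1, real_inner_self_eq_norm_sq]
  have h3 : ⟪x, mapE P x⟫ ≤ ‖x‖ * ‖mapE P x‖ := real_inner_le_norm _ _
  nlinarith [norm_nonneg (mapE P x), norm_nonneg x]

lemma spec_le_one {k : ℕ} {P : Matrix (Fin k) (Fin k) ℝ} (hsym : Pᵀ = P) (hidem : P * P = P) :
    spec P ≤ 1 := by
  rw [spec_eq]
  refine ContinuousLinearMap.opNorm_le_bound _ zero_le_one fun x => ?_
  simpa using contraction hsym hidem x

lemma exists_factor {m a b : ℕ} (M : Matrix (Fin m) (Fin a) ℝ) (N : Matrix (Fin m) (Fin b) ℝ)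
    (h : LinearMap.range N.mulVecLin ≤ LinearMap.range M.mulVecLin) :
    ∃ C : Matrix (Fin a) (Fin b) ℝ, N = M * C := by
  have hk : ∀ k : Fin b, ∃ v, M.mulVecLin v = N.mulVecLin (Pi.single k 1) := fun k =>
    h (LinearMap.mem_range_self N.mulVecLin (Pi.single k 1))
  choose c hc using hk
  refine ⟨Matrix.of fun i k => c k i, ?_⟩
  ext i k
  have := congrFun (hc k) i
  simp only [Matrix.mulVecLin_apply, Matrix.mulVec_single, mul_one] at this
  rw [Matrix.mul_apply]
  simp only [Matrix.of_apply]
  rw [show ∑ j, M i j * c k j = (M *ᵥ c k) i from rfl, this]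
  simp

lemma isUnit_ata {m n : ℕ} (A : Matrix (Fin m) (Fin n) ℝ) (hA : A.rank = n) :
    IsUnit (Aᵀ * A) := by
  have hr : (Aᵀ * A).rank = n := by rw [Matrix.rank_transpose_mul_self, hA]
  rw [← Matrix.mulVec_surjective_iff_isUnit]
  have htop : LinearMap.range (Aᵀ * A).mulVecLin = ⊤ := by
    apply Submodule.eq_top_of_finrank_eq
    rw [show Module.finrank ℝ ↥(LinearMap.range (Aᵀ * A).mulVecLin) = (Aᵀ * A).rank from rfl, hr]
    simp [Module.finrank_pi]
  intro y
  have : y ∈ LinearMap.range (Aᵀ * A).mulVecLin := htop ▸ Submodule.mem_top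
  obtain ⟨v, hv⟩ := this
  exact ⟨v, hv⟩

lemma pinv_mul {m n : ℕ} (A : Matrix (Fin m) (Fin n) ℝ) (hA : A.rank = n) :
    pinv A * A = 1 := by
  rw [pinv, Matrix.mul_assoc]
  exact Matrix.nonsing_inv_mul _ (Matrix.isUnit_iff_isUnit_det _ |>.mp (isUnit_ata A hA))

lemma pinv_proj_symm {m n : ℕ} (A : Matrix (Fin m) (Fin n) ℝ) :
    (A * pinv A)ᵀ = A * pinv A := by
  rw [pinv, ← Matrix.mul_assoc, Matrix.transpose_mul, Matrix.transpose_mul,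
    Matrix.transpose_nonsing_inv, Matrix.transpose_mul, Matrix.transpose_transpose,
    Matrix.mul_assoc]


lemma proj_eq {m n : ℕ} (A Q : Matrix (Fin m) (Fin n) ℝ) (hA : A.rank = n)
    (hQ : Qᵀ * Q = 1)
    (hrQ : LinearMap.range Q.mulVecLin = LinearMap.range A.mulVecLin) :
    A * pinv A = Q * Qᵀ := by
  have hpinvA : pinv A * A = 1 := pinv_mul A hA
  obtain ⟨W, hW⟩ := exists_factor A Q hrQ.le
  obtain ⟨V, hV⟩ := exists_factor Q A hrQ.ge
  have hsymP : (Q * Qᵀ)ᵀ = Q * Qᵀ := by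
    rw [Matrix.transpose_mul, Matrix.transpose_transpose]
  have hPQ : (Q * Qᵀ) * Q = Q := by rw [Matrix.mul_assoc, hQ, Matrix.mul_one]
  have hPA' : (Q * Qᵀ) * A = A := by rw [hV, ← Matrix.mul_assoc, hPQ]
  have hApA : A * pinv A * A = A := by rw [Matrix.mul_assoc, hpinvA, Matrix.mul_one]
  have hApinvQ : A * pinv A * Q = Q := by rw [hW, ← Matrix.mul_assoc, hApA]
  have h2 : A * pinv A * (Q * Qᵀ) = Q * Qᵀ := by rw [← Matrix.mul_assoc, hApinvQ]
  have h1 : (Q * Qᵀ) * (A * pinv A) = A * pinv A := by rw [← Matrix.mul_assoc, hPA']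
  have h4 : (Q * Qᵀ) * (A * pinv A) = Q * Qᵀ := by
    have h5 := congrArg Matrix.transpose h2
    rwa [Matrix.transpose_mul, hsymP, pinv_proj_symm] at h5
  rw [← h1, h4]

lemma claimB {m n : ℕ} (A ΔA : Matrix (Fin m) (Fin n) ℝ)
    (P Pt : Matrix (Fin m) (Fin m) ℝ)
    (hProj : A * pinv A = P) (hPtAt : Pt * (A + ΔA) = A + ΔA)
    (hsymPt : Ptᵀ = Pt) (hPtPt : Pt * Pt = Pt)
    (hpert : spec ΔA * spec (pinv A) ≤ 1 / 2) :
    spec ((1 - Pt) * A) ≤ 2 * spec ((1 - P) * ΔA) := by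
  have hzero : (1 - Pt) * (A + ΔA) = 0 := by
    rw [Matrix.sub_mul, Matrix.one_mul, hPtAt, sub_self]
  have hB0 : (1 - Pt) * A = -((1 - Pt) * ΔA) := by
    have h6 : (1 - Pt) * A + (1 - Pt) * ΔA = 0 := by rw [← Matrix.mul_add]; exact hzero
    exact eq_neg_of_add_eq_zero_left h6
  have hsym1Pt : ((1 : Matrix (Fin m) (Fin m) ℝ) - Pt)ᵀ = 1 - Pt := by
    rw [Matrix.transpose_sub, Matrix.transpose_one, hsymPt]
  have hidem1Pt : ((1 : Matrix (Fin m) (Fin m) ℝ) - Pt) * (1 - Pt) = 1 - Pt := by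
    rw [Matrix.mul_sub, Matrix.sub_mul, Matrix.sub_mul, Matrix.one_mul, Matrix.mul_one, hPtPt]
    simp
  have h1Pt : spec ((1 : Matrix (Fin m) (Fin m) ℝ) - Pt) ≤ 1 := spec_le_one hsym1Pt hidem1Pt
  have hsplit : (1 - Pt) * ΔA = (1 - Pt) * ((1 - P) * ΔA) + ((1 - Pt) * A) * (pinv A * ΔA) := by
    have e1 : ((1 - Pt) * A) * (pinv A * ΔA) = (1 - Pt) * (P * ΔA) := by
      rw [Matrix.mul_assoc (1 - Pt) A _, ← Matrix.mul_assoc A (pinv A) ΔA, hProj]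
    rw [e1, ← Matrix.mul_add, ← Matrix.add_mul, sub_add_cancel, Matrix.one_mul]
  have hst0 : 0 ≤ spec ((1 - P) * ΔA) := spec_nonneg _
  have hβ0 : 0 ≤ spec ((1 - Pt) * ΔA) := spec_nonneg _
  have hb1 : spec ((1 - Pt) * ((1 - P) * ΔA))
      ≤ spec ((1 : Matrix (Fin m) (Fin m) ℝ) - Pt) * spec ((1 - P) * ΔA) := spec_mul_le _ _
  have hb2 : spec (((1 - Pt) * A) * (pinv A * ΔA))
      ≤ spec ((1 - Pt) * ΔA) * (spec (pinv A) * spec ΔA) := by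
    calc spec (((1 - Pt) * A) * (pinv A * ΔA))
        ≤ spec ((1 - Pt) * A) * spec (pinv A * ΔA) := spec_mul_le _ _
      _ = spec ((1 - Pt) * ΔA) * spec (pinv A * ΔA) := by rw [hB0, spec_neg]
      _ ≤ spec ((1 - Pt) * ΔA) * (spec (pinv A) * spec ΔA) :=
          mul_le_mul_of_nonneg_left (spec_mul_le _ _) hβ0
  have htri : spec ((1 - Pt) * ΔA) ≤
      spec ((1 - Pt) * ((1 - P) * ΔA)) + spec (((1 - Pt) * A) * (pinv A * ΔA)) := by
    rw [hsplit]; exact spec_add_le _ _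
  have hc1 : spec ((1 : Matrix (Fin m) (Fin m) ℝ) - Pt) * spec ((1 - P) * ΔA)
      ≤ 1 * spec ((1 - P) * ΔA) := mul_le_mul_of_nonneg_right h1Pt hst0
  have hc2 : spec ((1 - Pt) * ΔA) * (spec (pinv A) * spec ΔA)
      ≤ spec ((1 - Pt) * ΔA) * (1 / 2) := by
    apply mul_le_mul_of_nonneg_left _ hβ0
    rw [mul_comm]; exact hpert
  rw [hB0, spec_neg]
  linarith

lemma claimC {m n : ℕ} (A ΔA : Matrix (Fin m) (Fin n) ℝ)
    (P Pt : Matrix (Fin m) (Fin m) ℝ)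
    (hProj : A * pinv A = P) (hPtAt : Pt * (A + ΔA) = A + ΔA)
    (hsymPt : Ptᵀ = Pt) (hPtPt : Pt * Pt = Pt)
    (hpert : spec ΔA * spec (pinv A) ≤ 1 / 2) :
    spec ((1 - Pt) * P) ≤ 2 * (spec (pinv A) * spec ((1 - P) * ΔA)) := by
  have e2 : (1 - Pt) * P = ((1 - Pt) * A) * pinv A := by
    rw [Matrix.mul_assoc, hProj]
  rw [e2]
  calc spec (((1 - Pt) * A) * pinv A) ≤ spec ((1 - Pt) * A) * spec (pinv A) := spec_mul_le _ _
    _ ≤ (2 * spec ((1 - P) * ΔA)) * spec (pinv A) :=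
        mul_le_mul_of_nonneg_right (claimB A ΔA P Pt hProj hPtAt hsymPt hPtPt hpert)
          (spec_nonneg _)
    _ = 2 * (spec (pinv A) * spec ((1 - P) * ΔA)) := by ring

lemma wbound {m n : ℕ} (A ΔA : Matrix (Fin m) (Fin n) ℝ)
    (P Pt : Matrix (Fin m) (Fin m) ℝ)
    (hpinvA : pinv A * A = 1) (hProj : A * pinv A = P) (hPA' : P * A = A)
    (hsymP : Pᵀ = P) (hPtPt : Pt * Pt = Pt) (hsymPt : Ptᵀ = Pt)
    (Z : Matrix (Fin n) (Fin m) ℝ) (hZ : Pt = (A + ΔA) * Z)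
    (hpert : spec ΔA * spec (pinv A) ≤ 1 / 2)
    (y : EuclideanSpace ℝ (Fin m)) (hPy : mapE P y = 0) :
    ‖mapE Pt y‖ ≤ 2 * (spec (pinv A) * spec ((1 - P) * ΔA)) * ‖y‖ := by
  set ap : ℝ := spec (pinv A) with hapdef
  set st : ℝ := spec ((1 - P) * ΔA) with hstdef
  set d : ℝ := spec ΔA with hddef
  have hap0 : 0 ≤ ap := spec_nonneg _
  have hst0 : 0 ≤ st := spec_nonneg _
  have hd0 : 0 ≤ d := spec_nonneg _
  have hapd : ap * d ≤ 1 / 2 := by rw [mul_comm]; exact hpert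
  set w : EuclideanSpace ℝ (Fin m) := mapE Pt y with hwdef
  set v : EuclideanSpace ℝ (Fin n) := mapE Z y with hvdef
  have hwv : w = mapE (A + ΔA) v := by rw [hwdef, hZ, mapE_mul, hvdef]
  have hv0 : 0 ≤ ‖v‖ := norm_nonneg v
  have hw0 : 0 ≤ ‖w‖ := norm_nonneg w
  have hy0 : 0 ≤ ‖y‖ := norm_nonneg y
  have hvb : ‖v‖ ≤ ap * (‖w‖ + d * ‖v‖) := by
    have e4 : v = mapE (pinv A) (mapE A v) := by
      rw [← mapE_mul, hpinvA, mapE_one]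
    have e5 : mapE A v = w - mapE ΔA v := by
      rw [hwv, mapE_add]
      abel
    calc ‖v‖ = ‖mapE (pinv A) (mapE A v)‖ := by rw [← e4]
      _ ≤ ap * ‖mapE A v‖ := mapE_le _ _
      _ ≤ ap * (‖w‖ + d * ‖v‖) := by
          apply mul_le_mul_of_nonneg_left _ hap0
          rw [e5]
          calc ‖w - mapE ΔA v‖ ≤ ‖w‖ + ‖mapE ΔA v‖ := norm_sub_le _ _
            _ ≤ ‖w‖ + d * ‖v‖ := by linarith [mapE_le ΔA v]
  have hv2 : ‖v‖ ≤ 2 * ap * ‖w‖ := by nlinarith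
  have hww : ‖w‖ ^ 2 = ⟪y, w⟫ := by
    rw [← real_inner_self_eq_norm_sq]
    have hPtw : mapE Pt w = w := by
      rw [hwdef, show mapE Pt (mapE Pt y) = mapE (Pt * Pt) y from (mapE_mul _ _ _).symm, hPtPt]
    rw [show (⟪w, w⟫ : ℝ) = ⟪mapE Pt y, w⟫ from by rw [← hwdef], mapE_inner, hsymPt, hPtw]
  have hyPw : ⟪y, mapE P w⟫ = 0 := by
    rw [real_inner_comm, mapE_inner, hsymP, hPy, inner_zero_right]
  have h1Pw : ‖mapE (1 - P) w‖ ≤ st * ‖v‖ := by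
    have hm : ((1 : Matrix (Fin m) (Fin m) ℝ) - P) * (A + ΔA) = (1 - P) * ΔA := by
      rw [Matrix.mul_add, Matrix.sub_mul, Matrix.one_mul, hPA', sub_self, zero_add]
    have e6 : mapE (1 - P) w = mapE ((1 - P) * ΔA) v := by
      rw [hwv, show mapE (1 - P) (mapE (A + ΔA) v) = mapE ((1 - P) * (A + ΔA)) v from
        (mapE_mul _ _ v).symm, hm]
    rw [e6]
    exact mapE_le _ _
  have hkey : ‖w‖ ^ 2 ≤ ‖y‖ * (st * (2 * ap * ‖w‖)) := by
    have e7 : ⟪y, w⟫ = ⟪y, mapE (1 - P) w⟫ := by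
      rw [mapE_sub, mapE_one, inner_sub_right, hyPw, sub_zero]
    calc ‖w‖ ^ 2 = ⟪y, mapE (1 - P) w⟫ := by rw [hww, e7]
      _ ≤ ‖y‖ * ‖mapE (1 - P) w‖ := real_inner_le_norm _ _
      _ ≤ ‖y‖ * (st * ‖v‖) := mul_le_mul_of_nonneg_left h1Pw (norm_nonneg y)
      _ ≤ ‖y‖ * (st * (2 * ap * ‖w‖)) := by
          apply mul_le_mul_of_nonneg_left _ (norm_nonneg y)
          exact mul_le_mul_of_nonneg_left hv2 hst0
  rcases hw0.eq_or_lt with h0 | h0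
  · rw [← h0]
    positivity
  · have hmul : ‖w‖ * ‖w‖ ≤ (2 * (ap * st) * ‖y‖) * ‖w‖ := by nlinarith
    exact le_of_mul_le_mul_right hmul h0

lemma inner_proj_self {k : ℕ} {P : Matrix (Fin k) (Fin k) ℝ} (hsym : Pᵀ = P)
    (hidem : P * P = P) (e : EuclideanSpace ℝ (Fin k)) :
    ⟪mapE P e, mapE P e⟫ = ⟪mapE P e, e⟫ := by
  rw [mapE_inner, hsym, show mapE P (mapE P e) = mapE (P * P) e from (mapE_mul _ _ _).symm,
    hidem]
  exact real_inner_comm _ _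

lemma decomp {k : ℕ} (P Pt : Matrix (Fin k) (Fin k) ℝ)
    (hsymP : Pᵀ = P) (hPP : P * P = P) (hsymPt : Ptᵀ = Pt) (hPtPt : Pt * Pt = Pt)
    (e : EuclideanSpace ℝ (Fin k)) :
    ⟪mapE Pt e, e⟫ - ⟪mapE P e, e⟫ =
      -‖mapE P e - mapE Pt (mapE P e)‖ ^ 2
      - 2 * ⟪e - mapE P e, mapE P e - mapE Pt (mapE P e)⟫
      + ‖mapE Pt (e - mapE P e)‖ ^ 2 := by
  set x : EuclideanSpace ℝ (Fin k) := mapE P e with hxdef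
  set y : EuclideanSpace ℝ (Fin k) := e - x with hydef
  set r : EuclideanSpace ℝ (Fin k) := x - mapE Pt x with hrdef
  set w : EuclideanSpace ℝ (Fin k) := mapE Pt y with hwdef
  have hPx : mapE P x = x := by
    rw [hxdef, show mapE P (mapE P e) = mapE (P * P) e from (mapE_mul _ _ _).symm, hPP]
  have hPtr : mapE Pt r = 0 := by
    have h8 : mapE Pt r = mapE Pt x - mapE Pt (mapE Pt x) := by rw [hrdef, map_sub]
    rw [h8, show mapE Pt (mapE Pt x) = mapE (Pt * Pt) x from (mapE_mul _ _ _).symm,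
      hPtPt, sub_self]
  have hxx : ⟪x, x⟫ = ⟪x, e⟫ := by
    rw [hxdef]
    rw [inner_proj_self hsymP hPP e]
  have hxy : ⟪x, y⟫ = 0 := by
    rw [hydef, inner_sub_right, hxx, sub_self]
  have hxsplit : x = r + mapE Pt x := by rw [hrdef]; abel
  have hPtx : mapE Pt x = x - r := by rw [hrdef]; abel
  have hesplit : e = x + y := by rw [hydef]; abel
  have hww2 : ‖w‖ ^ 2 = ⟪y, w⟫ := by
    rw [← real_inner_self_eq_norm_sq]
    have hPtw : mapE Pt w = w := by
      rw [hwdef, show mapE Pt (mapE Pt y) = mapE (Pt * Pt) y from (mapE_mul _ _ _).symm, hPtPt]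
    rw [show (⟪w, w⟫ : ℝ) = ⟪mapE Pt y, w⟫ from by rw [← hwdef], mapE_inner, hsymPt, hPtw]
  have hrx : ⟪r, x⟫ = ⟪r, r⟫ := by
    have h9 : ⟪r, mapE Pt x⟫ = 0 := by
      rw [real_inner_comm, mapE_inner, hsymPt, hPtr, inner_zero_right]
    calc ⟪r, x⟫ = ⟪r, r + mapE Pt x⟫ := by rw [← hxsplit]
      _ = ⟪r, r⟫ + ⟪r, mapE Pt x⟫ := inner_add_right _ _ _
      _ = ⟪r, r⟫ := by rw [h9, add_zero]
  have hwx : ⟪w, x⟫ = -⟪y, r⟫ := by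
    calc ⟪w, x⟫ = ⟪mapE Pt y, x⟫ := by rw [hwdef]
      _ = ⟪y, mapE Ptᵀ x⟫ := mapE_inner _ _ _
      _ = ⟪y, x - r⟫ := by rw [hsymPt, hPtx]
      _ = ⟪y, x⟫ - ⟪y, r⟫ := inner_sub_right _ _ _
      _ = -⟪y, r⟫ := by
          have h10 : (⟪y, x⟫ : ℝ) = 0 := by rw [real_inner_comm]; exact hxy
          rw [h10, zero_sub]
  have hwy : ⟪w, y⟫ = ‖w‖ ^ 2 := by rw [real_inner_comm, ← hww2]
  have hrr : ⟪r, r⟫ = ‖r‖ ^ 2 := real_inner_self_eq_norm_sq r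
  have hPte : mapE Pt e = (x - r) + w := by
    nth_rewrite 1 [hesplit]
    rw [map_add, hPtx, hwdef]
  have hPe : (⟪mapE P e, e⟫ : ℝ) = ⟪x, x⟫ := by rw [← hxdef, ← hxx]
  have expand : (⟪(x - r) + w, x + y⟫ : ℝ)
      = ⟪x, x⟫ + ⟪x, y⟫ - ⟪r, x⟫ - ⟪r, y⟫ + ⟪w, x⟫ + ⟪w, y⟫ := by
    rw [inner_add_left, inner_sub_left, inner_add_right, inner_add_right, inner_add_right,
      inner_sub_left]
    ring
  have lhs1 : (⟪mapE Pt e, e⟫ : ℝ) = ⟪(x - r) + w, x + y⟫ := by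
    rw [hPte]
    nth_rewrite 1 [hesplit]
    rfl
  rw [lhs1, hPe, expand, hxy, hrx, hwx, hwy, real_inner_comm r y, hrr]
  ring

lemma absbound (ℓ s Δ nr nw yr : ℝ) (hl : 0 < ℓ) (hl1 : ℓ ≤ 1) (hs : 0 ≤ s)
    (hΔ : Δ = -nr ^ 2 - 2 * yr + nw ^ 2) (hnr0 : 0 ≤ nr) (hnw0 : 0 ≤ nw)
    (hyr : |yr| ≤ Real.sqrt (1 - ℓ) * nr)
    (hnr : nr ≤ 2 * s * Real.sqrt ℓ) (hnw : nw ≤ 2 * s * Real.sqrt (1 - ℓ)) :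
    |Δ| ≤ 4 * s * (Real.sqrt ℓ * Real.sqrt (1 - ℓ)) + 4 * s ^ 2 := by
  have hsqℓ : Real.sqrt ℓ ^ 2 = ℓ := Real.sq_sqrt hl.le
  have hsq1ℓ : Real.sqrt (1 - ℓ) ^ 2 = 1 - ℓ := Real.sq_sqrt (by linarith)
  have hsℓ0 : 0 ≤ Real.sqrt ℓ := Real.sqrt_nonneg _
  have hs1ℓ0 : 0 ≤ Real.sqrt (1 - ℓ) := Real.sqrt_nonneg _
  have hyrle := abs_le.mp hyr
  have hr2 : nr ^ 2 ≤ 4 * s ^ 2 * ℓ := by nlinarith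
  have hw2 : nw ^ 2 ≤ 4 * s ^ 2 * (1 - ℓ) := by nlinarith
  rw [hΔ, abs_le]
  constructor
  · nlinarith [mul_le_mul_of_nonneg_left hnr hs1ℓ0]
  · nlinarith [mul_le_mul_of_nonneg_left hnr hs1ℓ0]

lemma final_calc (ℓ s Δ : ℝ) (hl : 0 < ℓ) (hl1 : ℓ ≤ 1) (hs : 0 ≤ s)
    (h : |Δ| ≤ 4 * s * (Real.sqrt ℓ * Real.sqrt (1 - ℓ)) + 4 * s ^ 2) :
    |Δ| / ℓ ≤ 4 * (Real.sqrt ((1 - ℓ) / ℓ) + s / ℓ) * s := by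
  have hms : Real.sqrt ℓ * Real.sqrt ℓ = ℓ := Real.mul_self_sqrt hl.le
  have hsq : Real.sqrt ((1 - ℓ) / ℓ) = Real.sqrt (1 - ℓ) / Real.sqrt ℓ :=
    Real.sqrt_div (by linarith) ℓ
  have hsqrtpos : 0 < Real.sqrt ℓ := Real.sqrt_pos.mpr hl
  have hldiv : |Δ| / ℓ ≤ (4 * s * (Real.sqrt ℓ * Real.sqrt (1 - ℓ)) + 4 * s ^ 2) / ℓ :=
    (div_le_div_iff_of_pos_right hl).mpr h
  refine hldiv.trans (le_of_eq ?_)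
  rw [hsq]
  field_simp
  linear_combination (s * Real.sqrt (1 - ℓ)) * hms

lemma coord {m : ℕ} (j : Fin m) (M : Matrix (Fin m) (Fin m) ℝ) :
    ⟪mapE M (EuclideanSpace.single j (1:ℝ)), EuclideanSpace.single j (1:ℝ)⟫ = M j j := by
  rw [EuclideanSpace.inner_single_right]
  have h2 : mapE M (EuclideanSpace.single j (1:ℝ))
      = (WithLp.equiv 2 (Fin m → ℝ)).symm (M *ᵥ Pi.single j 1) := by
    exact Matrix.toEuclideanLin_apply_piLp_toLp M _
  rw [h2]
  simp [Matrix.mulVec_single]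

end StAux

open StAux in
set_option maxHeartbeats 1000000 in
theorem stmt10 {m n : ℕ} (A ΔA : Matrix (Fin m) (Fin n) ℝ)
    (hA : A.rank = n) (hpert : spec ΔA * spec (pinv A) ≤ 1 / 2)
    (Q Qt : Matrix (Fin m) (Fin n) ℝ)
    (hQ : Qᵀ * Q = 1) (hQt : Qtᵀ * Qt = 1)
    (hrQ : LinearMap.range Q.mulVecLin = LinearMap.range A.mulVecLin)
    (hrQt : LinearMap.range Qt.mulVecLin = LinearMap.range (A + ΔA).mulVecLin) :
    ∀ j, 0 < lev Q j →
      |lev Qt j - lev Q j| / lev Q j ≤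
        4 * (Real.sqrt ((1 - lev Q j) / lev Q j)
          + spec A * spec (pinv A) * (spec ((1 - A * pinv A) * ΔA) / spec A) / lev Q j)
        * (spec A * spec (pinv A) * (spec ((1 - A * pinv A) * ΔA) / spec A)) := by
  intro j hl
  rcases Nat.eq_zero_or_pos n with hn | hn
  · exfalso; subst hn; rw [lev] at hl; simp at hl
  have hpinvA : pinv A * A = 1 := pinv_mul A hA
  have hAne : A ≠ 0 := by
    intro h
    rw [h, Matrix.mul_zero] at hpinvA
    have := congrFun (congrFun hpinvA ⟨0, hn⟩) ⟨0, hn⟩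
    simp [Matrix.one_apply] at this
  have hspecA : 0 < spec A := by
    rcases (spec_nonneg A).eq_or_lt with h | h
    · exact absurd (eq_zero_of_spec_eq_zero h.symm) hAne
    · exact h
  have hProj : A * pinv A = Q * Qᵀ := proj_eq A Q hA hQ hrQ
  rw [hProj]
  set ℓ : ℝ := lev Q j with hℓdef
  set s : ℝ := spec (pinv A) * spec ((1 - Q * Qᵀ) * ΔA) with hsdef
  have hs0 : 0 ≤ s := mul_nonneg (spec_nonneg _) (spec_nonneg _)
  -- projector facts
  have hsymP : (Q * Qᵀ)ᵀ = Q * Qᵀ := by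
    rw [Matrix.transpose_mul, Matrix.transpose_transpose]
  have hsymPt : (Qt * Qtᵀ)ᵀ = Qt * Qtᵀ := by
    rw [Matrix.transpose_mul, Matrix.transpose_transpose]
  have hPP : (Q * Qᵀ) * (Q * Qᵀ) = Q * Qᵀ := by
    rw [Matrix.mul_assoc, ← Matrix.mul_assoc Qᵀ, hQ, Matrix.one_mul]
  have hPtPt : (Qt * Qtᵀ) * (Qt * Qtᵀ) = Qt * Qtᵀ := by
    rw [Matrix.mul_assoc, ← Matrix.mul_assoc Qtᵀ, hQt, Matrix.one_mul]
  have hPQ : (Q * Qᵀ) * Q = Q := by rw [Matrix.mul_assoc, hQ, Matrix.mul_one]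
  have hPtQt : (Qt * Qtᵀ) * Qt = Qt := by rw [Matrix.mul_assoc, hQt, Matrix.mul_one]
  obtain ⟨V, hV⟩ := exists_factor Q A hrQ.ge
  have hPA' : (Q * Qᵀ) * A = A := by rw [hV, ← Matrix.mul_assoc, hPQ]
  obtain ⟨Vt, hVt⟩ := exists_factor Qt (A + ΔA) hrQt.ge
  have hPtAt : (Qt * Qtᵀ) * (A + ΔA) = A + ΔA := by rw [hVt, ← Matrix.mul_assoc, hPtQt]
  obtain ⟨Wt, hWt⟩ := exists_factor (A + ΔA) Qt hrQt.le
  have hZ : Qt * Qtᵀ = (A + ΔA) * (Wt * Qtᵀ) := by rw [← Matrix.mul_assoc, ← hWt]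
  have hclaimC := claimC A ΔA (Q * Qᵀ) (Qt * Qtᵀ) hProj hPtAt hsymPt hPtPt hpert
  -- vectors
  set ej : EuclideanSpace ℝ (Fin m) := EuclideanSpace.single j (1 : ℝ) with hejdef
  have hejnorm : ‖ej‖ = 1 := by rw [hejdef, EuclideanSpace.norm_single]; norm_num
  set x : EuclideanSpace ℝ (Fin m) := mapE (Q * Qᵀ) ej with hxdef
  set y : EuclideanSpace ℝ (Fin m) := ej - x with hydef
  set r : EuclideanSpace ℝ (Fin m) := x - mapE (Qt * Qtᵀ) x with hrdef
  set w : EuclideanSpace ℝ (Fin m) := mapE (Qt * Qtᵀ) y with hwdef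
  have hlevP : (Q * Qᵀ) j j = ℓ := by
    rw [hℓdef, Matrix.mul_apply, lev]
    congr 1; ext k; rw [Matrix.transpose_apply, sq]
  have hlevPt : (Qt * Qtᵀ) j j = lev Qt j := by
    rw [Matrix.mul_apply, lev]
    congr 1; ext k; rw [Matrix.transpose_apply, sq]
  have hxe : ⟪x, ej⟫ = ℓ := by rw [hxdef, hejdef, coord, hlevP]
  have hPtee : ⟪mapE (Qt * Qtᵀ) ej, ej⟫ = lev Qt j := by rw [hejdef, coord, hlevPt]
  have hxx : ⟪x, x⟫ = ℓ := by
    rw [hxdef, inner_proj_self hsymP hPP ej, ← hxdef, hxe]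
  have hx2 : ‖x‖ ^ 2 = ℓ := by rw [← real_inner_self_eq_norm_sq, hxx]
  have hl1 : ℓ ≤ 1 := by
    have hc := contraction hsymP hPP ej
    rw [← hxdef, hejnorm] at hc
    nlinarith [norm_nonneg x]
  have hxnorm : ‖x‖ = Real.sqrt ℓ := by rw [← hx2, Real.sqrt_sq (norm_nonneg x)]
  have hy2 : ‖y‖ ^ 2 = 1 - ℓ := by
    rw [hydef, norm_sub_sq_real, hejnorm, real_inner_comm, hxe, hx2]; ring
  have hynorm : ‖y‖ = Real.sqrt (1 - ℓ) := by rw [← hy2, Real.sqrt_sq (norm_nonneg y)]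
  have hPx : mapE (Q * Qᵀ) x = x := by
    rw [hxdef, show mapE (Q * Qᵀ) (mapE (Q * Qᵀ) ej) = mapE ((Q * Qᵀ) * (Q * Qᵀ)) ej from
      (mapE_mul _ _ _).symm, hPP]
  have hPy : mapE (Q * Qᵀ) y = 0 := by
    rw [hydef, map_sub, hPx, ← hxdef, sub_self]
  -- r bound
  have hrb : ‖r‖ ≤ 2 * s * Real.sqrt ℓ := by
    have e3 : r = mapE ((1 - Qt * Qtᵀ) * (Q * Qᵀ)) x := by
      rw [mapE_mul, hPx, mapE_sub, mapE_one, hrdef]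
    rw [e3, ← hxnorm]
    calc ‖mapE ((1 - Qt * Qtᵀ) * (Q * Qᵀ)) x‖
        ≤ spec ((1 - Qt * Qtᵀ) * (Q * Qᵀ)) * ‖x‖ := mapE_le _ _
      _ ≤ 2 * s * ‖x‖ := by
          apply mul_le_mul_of_nonneg_right _ (norm_nonneg x)
          rw [hsdef]; exact hclaimC
  -- w bound
  have hwb : ‖w‖ ≤ 2 * s * Real.sqrt (1 - ℓ) := by
    have := wbound A ΔA (Q * Qᵀ) (Qt * Qtᵀ) hpinvA hProj hPA' hsymP hPtPt hsymPt
      (Wt * Qtᵀ) hZ hpert y hPy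
    rw [hynorm, ← hwdef] at this
    calc ‖w‖ ≤ 2 * (spec (pinv A) * spec ((1 - Q * Qᵀ) * ΔA)) * Real.sqrt (1 - ℓ) := this
      _ = 2 * s * Real.sqrt (1 - ℓ) := by rw [hsdef]
  -- decomposition
  have hdec := decomp (Q * Qᵀ) (Qt * Qtᵀ) hsymP hPP hsymPt hPtPt ej
  rw [← hxdef, ← hydef, ← hrdef, ← hwdef, hPtee, hxe] at hdec
  have hyr' : |⟪y, r⟫| ≤ Real.sqrt (1 - ℓ) * ‖r‖ := by
    rw [← hynorm]; exact abs_real_inner_le_norm y r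
  have habs := absbound ℓ s (lev Qt j - ℓ) ‖r‖ ‖w‖ ⟪y, r⟫ hl hl1 hs0 hdec
    (norm_nonneg r) (norm_nonneg w) hyr' hrb hwb
  have hfinal := final_calc ℓ s (lev Qt j - ℓ) hl hl1 hs0 habs
  have hT : spec A * spec (pinv A) * (spec ((1 - Q * Qᵀ) * ΔA) / spec A) = s := by
    rw [hsdef]; field_simp
  rw [hT]
  exact hfinal
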